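/- There exists a heteroclinic orbit of F connecting the saddle (π,0) to the sink (π,π): there exists a sequence X : ℤ → ℝ² with X(n+1) = F(X(n)) for all n ∈ ℤ, X(n) ≠ (π,0) and X(n) ≠ (π,π) for all n, X(n) → (π,π) as n → +∞, and X(n) → (π,0) as n → −∞. -/

import Mathlib

noncomputable def F (a : ℝ) : ℝ × ℝ → ℝ × ℝ :=
  fun p => (p.1 + 2 * a * Real.sin p.1 + a * Real.sin p.2,
            p.2 + a * Real.sin p.1 + 2 * a * Real.sin p.2)

namespace Het

open Real Filter Topology

lemma sin_lower {u : ℝ} (h0 : 0 ≤ u) (h1 : u ≤ 1) : 3/4 * u ≤ Real.sin u := by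
  rcases eq_or_lt_of_le h0 with h | h
  · simp [← h]
  · have := Real.sin_gt_sub_cube h
    nlinarith [mul_nonneg (mul_nonneg h0 (sub_nonneg.2 h1)) (by linarith : (0:ℝ) ≤ 1 + u)]

lemma abs_sin_sub {d : ℝ} (h : |d| ≤ 1/2) : |Real.sin d - d| ≤ d^2/8 := by
  have key : ∀ e : ℝ, 0 ≤ e → |e| ≤ 1/2 → |Real.sin e - e| ≤ e^2/8 := by
    intro e he habs
    rcases eq_or_lt_of_le he with h0 | h0
    · simp [← h0]
    · have h1 : e ≤ 1 := by
        have := abs_le.1 habs; linarith [this.2]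
      have hgt := Real.sin_gt_sub_cube h0
      have hle := Real.sin_le he
      rw [abs_le]
      constructor
      · nlinarith [abs_le.1 habs]
      · nlinarith
  rcases le_or_gt 0 d with hd | hd
  · exact key d hd h
  · have := key (-d) (by linarith) (by rwa [abs_neg])
    rw [Real.sin_neg] at this
    have h2 : |Real.sin d - d| = |-Real.sin d - -d| := by
      rw [show -Real.sin d - -d = -(Real.sin d - d) by ring, abs_neg]
    rw [h2]
    calc |-Real.sin d - -d| ≤ (-d)^2/8 := this
      _ = d^2/8 := by ring

lemma cos_step {x d : ℝ} (h : |d| ≤ 1/2) :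
    Real.cos (x + d) ≤ Real.cos x - Real.sin x * d + (5/8) * d^2 := by
  have e : Real.cos (x + d) = Real.cos x - Real.sin x * d
      + (Real.cos x * (Real.cos d - 1) + Real.sin x * (d - Real.sin d)) := by
    rw [Real.cos_add]; ring
  rw [e]
  have h1 : Real.cos x * (Real.cos d - 1) ≤ d^2/2 := by
    have := Real.one_sub_sq_div_two_le_cos (x := d)
    have hc := Real.cos_le_one d
    have habs : |Real.cos d - 1| ≤ d^2/2 := by
      rw [abs_le]; constructor <;> nlinarith
    calc Real.cos x * (Real.cos d - 1) ≤ |Real.cos x * (Real.cos d - 1)| := le_abs_self _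
      _ = |Real.cos x| * |Real.cos d - 1| := abs_mul _ _
      _ ≤ 1 * (d^2/2) := by
          apply mul_le_mul (Real.abs_cos_le_one x) habs (abs_nonneg _) zero_le_one
      _ = d^2/2 := by ring
  have h2 : Real.sin x * (d - Real.sin d) ≤ d^2/8 := by
    have habs := abs_sin_sub h
    rw [abs_sub_comm] at habs
    calc Real.sin x * (d - Real.sin d) ≤ |Real.sin x * (d - Real.sin d)| := le_abs_self _
      _ = |Real.sin x| * |d - Real.sin d| := abs_mul _ _
      _ ≤ 1 * (d^2/8) := by
          apply mul_le_mul (Real.abs_sin_le_one x) habs (abs_nonneg _) zero_le_one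
      _ = d^2/8 := by ring
  linarith

noncomputable def L (p : ℝ × ℝ) : ℝ := Real.cos p.1 + Real.cos p.2

lemma lyap {a : ℝ} (ha : 0 < a) (ha' : a < 1/6) (p : ℝ × ℝ) :
    L (F a p) ≤ L p - a/16 * (Real.sin p.1 ^ 2 + Real.sin p.2 ^ 2) := by
  set s := Real.sin p.1 with hs
  set t := Real.sin p.2 with ht
  have hs1 : |s| ≤ 1 := Real.abs_sin_le_one _
  have ht1 : |t| ≤ 1 := Real.abs_sin_le_one _
  have hd1 : |a * (2*s + t)| ≤ 1/2 := by
    rw [abs_mul, abs_of_pos ha]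
    have : |2*s + t| ≤ 3 := by
      calc |2*s + t| ≤ |2*s| + |t| := abs_add_le _ _
        _ ≤ 2 + 1 := by rw [abs_mul, abs_two]; linarith
        _ = 3 := by norm_num
    nlinarith
  have hd2 : |a * (s + 2*t)| ≤ 1/2 := by
    rw [abs_mul, abs_of_pos ha]
    have : |s + 2*t| ≤ 3 := by
      calc |s + 2*t| ≤ |s| + |2*t| := abs_add_le _ _
        _ ≤ 1 + 2 := by rw [abs_mul, abs_two]; linarith
        _ = 3 := by norm_num
    nlinarith
  have e1 : (F a p).1 = p.1 + a * (2*s + t) := by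
    simp only [F, ← hs, ← ht]; ring
  have e2 : (F a p).2 = p.2 + a * (s + 2*t) := by
    simp only [F, ← hs, ← ht]; ring
  have c1 : Real.cos ((F a p).1) ≤ Real.cos p.1 - s * (a * (2*s + t)) + (5/8) * (a * (2*s + t))^2 := by
    rw [e1]; exact cos_step hd1
  have c2 : Real.cos ((F a p).2) ≤ Real.cos p.2 - t * (a * (s + 2*t)) + (5/8) * (a * (s + 2*t))^2 := by
    rw [e2]; exact cos_step hd2
  have key : - s * (a * (2*s + t)) - t * (a * (s + 2*t))
      + (5/8) * (a * (2*s + t))^2 + (5/8) * (a * (s + 2*t))^2 ≤ - (a/16) * (s^2 + t^2) := by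
    nlinarith [sq_nonneg (s + t), sq_nonneg (s - t), mul_pos ha ha, sq_nonneg s, sq_nonneg t,
      mul_nonneg (mul_nonneg ha.le ha.le) (sq_nonneg (s+t)), mul_nonneg ha.le (sq_nonneg (s+t)),
      mul_nonneg ha.le (sq_nonneg (s-t)), mul_nonneg (mul_nonneg ha.le ha.le) (sq_nonneg (s-t))]
  simp only [L]
  linarith

def Rset : Set (ℝ × ℝ) :=
  {p | π ≤ p.1 ∧ p.1 ≤ π + 1 ∧ 0 ≤ p.2 ∧ p.2 ≤ π ∧ 2 * (p.1 - π) ≤ p.2}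

noncomputable def P0 : ℝ × ℝ := (π, 0)

noncomputable def P1 : ℝ × ℝ := (π, π)

lemma P0_mem : P0 ∈ Rset := by
  simp only [Rset, P0, Set.mem_setOf_eq]
  norm_num [Real.pi_pos.le]

lemma P1_mem : P1 ∈ Rset := by
  simp only [Rset, P1, Set.mem_setOf_eq]
  norm_num [Real.pi_pos.le]

lemma FP0 (a : ℝ) : F a P0 = P0 := by simp [F, P0]

lemma FP1 (a : ℝ) : F a P1 = P1 := by simp [F, P1]

lemma Rset_inv {a : ℝ} (ha : 0 < a) (ha' : a < 1/6) {p : ℝ × ℝ} (hp : p ∈ Rset) :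
    F a p ∈ Rset := by
  obtain ⟨h1, h2, h3, h4, h5⟩ := hp
  set x := p.1; set y := p.2
  set u := x - π with hu
  have hu0 : 0 ≤ u := by simp [hu]; linarith
  have hu1 : u ≤ 1 := by simp [hu]; linarith
  have hsx : Real.sin x = - Real.sin u := by
    rw [hu, show x - π = -(π - x) by ring, Real.sin_neg, Real.sin_pi_sub]
    ring
  have hsu0 : 0 ≤ Real.sin u := Real.sin_nonneg_of_nonneg_of_le_pi hu0 (by linarith [Real.pi_gt_three])
  have hsuu : Real.sin u ≤ u := Real.sin_le hu0
  have hsy0 : 0 ≤ Real.sin y := Real.sin_nonneg_of_nonneg_of_le_pi h3 h4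
  have hsy1 : Real.sin y ≤ 1 := Real.sin_le_one _
  have hsypi : Real.sin y ≤ π - y := by
    rw [← Real.sin_pi_sub]; exact Real.sin_le (by linarith)
  have e1 : (F a p).1 = π + (u - 2*a*Real.sin u + a * Real.sin y) := by
    simp only [F]; rw [hsx, hu]; ring
  have e2 : (F a p).2 = y - a * Real.sin u + 2*a*Real.sin y := by
    simp only [F]; rw [hsx]; ring
  refine ⟨?_, ?_, ?_, ?_, ?_⟩
  · rw [e1]; nlinarith
  · rw [e1]
    rcases le_or_gt u (1 - a) with hc | hc
    · nlinarith
    · have hub : 3/4 * u ≤ Real.sin u := sin_lower hu0 hu1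
      nlinarith
  · rw [e2]; nlinarith
  · rw [e2]; nlinarith
  · rw [e1, e2]; nlinarith

lemma Rset_compact : IsCompact Rset := by
  have hclosed : IsClosed Rset := by
    apply IsClosed.inter
    · exact isClosed_le continuous_const continuous_fst
    apply IsClosed.inter
    · exact isClosed_le continuous_fst continuous_const
    apply IsClosed.inter
    · exact isClosed_le continuous_const continuous_snd
    apply IsClosed.inter
    · exact isClosed_le continuous_snd continuous_const
    · exact isClosed_le (by continuity) continuous_snd
  have hsub : Rset ⊆ Set.Icc (π, 0) (π + 1, π) := by
    rintro p ⟨h1, h2, h3, h4, h5⟩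
    exact ⟨⟨h1, h3⟩, ⟨h2, h4⟩⟩
  exact (isCompact_Icc).of_isClosed_subset hclosed hsub

lemma Rset_convex : Convex ℝ Rset := by
  intro p hp q hq b c hb hc hbc
  obtain ⟨p1, p2, p3, p4, p5⟩ := hp
  obtain ⟨q1, q2, q3, q4, q5⟩ := hq
  have e1 : (b • p + c • q).1 = b * p.1 + c * q.1 := rfl
  have e2 : (b • p + c • q).2 = b * p.2 + c * q.2 := rfl
  refine ⟨?_, ?_, ?_, ?_, ?_⟩ <;> simp only [e1, e2] <;> nlinarith

lemma Rset_preconnected : IsPreconnected Rset := Rset_convex.isPreconnected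

lemma F_cont (a : ℝ) : Continuous (F a) := by
  unfold F; fun_prop

lemma sin_lip (u v : ℝ) : |Real.sin u - Real.sin v| ≤ |u - v| := by
  rw [Real.sin_sub_sin]
  rw [abs_mul, abs_mul, abs_two]
  calc 2 * |Real.sin ((u - v)/2)| * |Real.cos ((u + v)/2)|
      ≤ 2 * |(u - v)/2| * 1 := by
        apply mul_le_mul _ (Real.abs_cos_le_one _) (abs_nonneg _)
        · positivity
        · apply mul_le_mul_of_nonneg_left Real.abs_sin_le_abs (by norm_num)
    _ = |u - v| := by rw [abs_div, abs_two]; ring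

lemma F_inj {a : ℝ} (ha : 0 < a) (ha' : a < 1/6) : Function.Injective (F a) := by
  intro p q h
  have h1 : (F a p).1 = (F a q).1 := by rw [h]
  have h2 : (F a p).2 = (F a q).2 := by rw [h]
  simp only [F] at h1 h2
  have lip1 : |Real.sin p.1 - Real.sin q.1| ≤ |p.1 - q.1| := sin_lip _ _
  have lip2 : |Real.sin p.2 - Real.sin q.2| ≤ |p.2 - q.2| := sin_lip _ _
  have e1 : p.1 - q.1 = -(2*a*(Real.sin p.1 - Real.sin q.1) + a*(Real.sin p.2 - Real.sin q.2)) := by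
    linarith
  have e2 : p.2 - q.2 = -(a*(Real.sin p.1 - Real.sin q.1) + 2*a*(Real.sin p.2 - Real.sin q.2)) := by
    linarith
  have b1 : |p.1 - q.1| ≤ 2*a*|p.1 - q.1| + a*|p.2 - q.2| := by
    calc |p.1 - q.1| = |2*a*(Real.sin p.1 - Real.sin q.1) + a*(Real.sin p.2 - Real.sin q.2)| := by
          rw [e1, abs_neg]
      _ ≤ |2*a*(Real.sin p.1 - Real.sin q.1)| + |a*(Real.sin p.2 - Real.sin q.2)| := abs_add_le _ _
      _ ≤ 2*a*|p.1 - q.1| + a*|p.2 - q.2| := by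
          have m1 : |2*a*(Real.sin p.1 - Real.sin q.1)| = 2*a*|Real.sin p.1 - Real.sin q.1| := by
            rw [abs_mul, abs_of_pos (by linarith : (0:ℝ) < 2*a)]
          have m2 : |a*(Real.sin p.2 - Real.sin q.2)| = a*|Real.sin p.2 - Real.sin q.2| := by
            rw [abs_mul, abs_of_pos ha]
          rw [m1, m2]
          nlinarith
  have b2 : |p.2 - q.2| ≤ a*|p.1 - q.1| + 2*a*|p.2 - q.2| := by
    calc |p.2 - q.2| = |a*(Real.sin p.1 - Real.sin q.1) + 2*a*(Real.sin p.2 - Real.sin q.2)| := by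
          rw [e2, abs_neg]
      _ ≤ |a*(Real.sin p.1 - Real.sin q.1)| + |2*a*(Real.sin p.2 - Real.sin q.2)| := abs_add_le _ _
      _ ≤ a*|p.1 - q.1| + 2*a*|p.2 - q.2| := by
          have m1 : |a*(Real.sin p.1 - Real.sin q.1)| = a*|Real.sin p.1 - Real.sin q.1| := by
            rw [abs_mul, abs_of_pos ha]
          have m2 : |2*a*(Real.sin p.2 - Real.sin q.2)| = 2*a*|Real.sin p.2 - Real.sin q.2| := by
            rw [abs_mul, abs_of_pos (by linarith : (0:ℝ) < 2*a)]
          rw [m1, m2]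
          nlinarith
  have hz1 : |p.1 - q.1| = 0 := by
    have h0 := abs_nonneg (p.1 - q.1)
    have h0' := abs_nonneg (p.2 - q.2)
    nlinarith
  have hz2 : |p.2 - q.2| = 0 := by
    have h0 := abs_nonneg (p.1 - q.1)
    nlinarith
  have : p.1 = q.1 := by rwa [abs_eq_zero, sub_eq_zero] at hz1
  have : p.2 = q.2 := by rwa [abs_eq_zero, sub_eq_zero] at hz2
  exact Prod.ext ‹p.1 = q.1› this

section Orbit
variable {a : ℝ} (ha : 0 < a) (ha' : a < 1/6)

noncomputable def Kn (a : ℝ) (n : ℕ) : Set (ℝ × ℝ) := (F a)^[n] '' Rset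

lemma Kn_zero (a : ℝ) : Kn a 0 = Rset := by simp [Kn]

lemma Kn_succ (a : ℝ) (n : ℕ) : Kn a (n+1) = F a '' Kn a n := by
  simp [Kn, Function.iterate_succ_apply', Set.image_image]

include ha ha' in
lemma Kn_sub (n : ℕ) : Kn a (n+1) ⊆ Kn a n := by
  have h1 : Kn a (n+1) = (F a)^[n] '' (F a '' Rset) := by
    simp [Kn, Function.iterate_succ_apply, Set.image_image]
  rw [h1]
  apply Set.image_mono
  rintro _ ⟨p, hp, rfl⟩
  exact Rset_inv ha ha' hp

include ha ha' in
lemma Kn_sub_R (n : ℕ) : Kn a n ⊆ Rset := by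
  induction n with
  | zero => simp [Kn_zero]
  | succ k ih => exact (Kn_sub ha ha' k).trans ih

lemma Kn_compact (a : ℝ) (n : ℕ) : IsCompact (Kn a n) :=
  (Rset_compact.image ((F_cont a).iterate n))

lemma Kn_preconnected (a : ℝ) (n : ℕ) : IsPreconnected (Kn a n) :=
  (Rset_preconnected.image _ ((F_cont a).iterate n).continuousOn)

lemma P0_mem_Kn (a : ℝ) (n : ℕ) : P0 ∈ Kn a n := by
  refine ⟨P0, P0_mem, ?_⟩
  apply Function.iterate_fixed (FP0 a)

lemma P1_mem_Kn (a : ℝ) (n : ℕ) : P1 ∈ Kn a n := by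
  refine ⟨P1, P1_mem, ?_⟩
  apply Function.iterate_fixed (FP1 a)

lemma dist_P1_P0 : dist P1 P0 = π := by
  rw [Prod.dist_eq]
  simp [P0, P1, Real.dist_eq, abs_of_nonneg Real.pi_pos.le]
  exact Real.pi_pos.le

include ha ha' in
lemma exists_q : ∃ q, q ∈ (⋂ n, Kn a n) ∧ dist q P0 = 1 := by
  have hmem : ∀ n, ∃ p ∈ Kn a n, dist p P0 = 1 := by
    intro n
    have hIcc : Set.Icc (dist P0 P0) (dist P1 P0) ⊆ (fun p => dist p P0) '' Kn a n :=
      (Kn_preconnected a n).intermediate_value (P0_mem_Kn a n) (P1_mem_Kn a n)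
        (Continuous.continuousOn (continuous_id.dist continuous_const))
    have h1 : (1:ℝ) ∈ Set.Icc (dist P0 P0) (dist P1 P0) := by
      rw [dist_self, dist_P1_P0]
      exact ⟨zero_le_one, by linarith [Real.pi_gt_three]⟩
    obtain ⟨p, hp, hd⟩ := hIcc h1
    exact ⟨p, hp, hd⟩
  set C : ℕ → Set (ℝ × ℝ) := fun n => Kn a n ∩ {p | dist p P0 = 1} with hC
  have hne : ∀ n, (C n).Nonempty := by
    intro n; obtain ⟨p, hp, hd⟩ := hmem n; exact ⟨p, hp, hd⟩
  have hclosed : ∀ n, IsClosed (C n) := by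
    intro n
    exact ((Kn_compact a n).isClosed).inter (isClosed_eq (by continuity) continuous_const)
  have hsub : ∀ n, C (n+1) ⊆ C n := fun n =>
    Set.inter_subset_inter_left _ (Kn_sub ha ha' n)
  have hcomp : IsCompact (C 0) :=
    (Kn_compact a 0).inter_right (isClosed_eq (continuous_id.dist continuous_const) continuous_const)
  obtain ⟨q, hq⟩ := IsCompact.nonempty_iInter_of_sequence_nonempty_isCompact_isClosed
    C hsub hne hcomp hclosed
  refine ⟨q, ?_, ?_⟩
  · rw [Set.mem_iInter]
    intro n
    exact ((Set.mem_iInter.1 hq) n).1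
  · exact ((Set.mem_iInter.1 hq) 0).2
end Orbit

noncomputable def Kinf (a : ℝ) : Set (ℝ × ℝ) := ⋂ n, Kn a n

lemma Kinf_sub_R (a : ℝ) : Kinf a ⊆ Rset := by
  intro p hp
  have := (Set.mem_iInter.1 hp) 0
  rwa [Kn_zero] at this

lemma preimage_step {a : ℝ} (ha : 0 < a) (ha' : a < 1/6) {q : ℝ × ℝ} (hq : q ∈ Kinf a) :
    ∃ z, z ∈ Kinf a ∧ F a z = q := by
  set D : ℕ → Set (ℝ × ℝ) := fun n => Kn a n ∩ (F a) ⁻¹' {q} with hD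
  have hne : ∀ n, (D n).Nonempty := by
    intro n
    have hq1 : q ∈ Kn a (n+1) := (Set.mem_iInter.1 hq) (n+1)
    rw [Kn_succ] at hq1
    obtain ⟨z, hz, hfz⟩ := hq1
    exact ⟨z, hz, by simpa using hfz⟩
  have hclosed : ∀ n, IsClosed (D n) :=
    fun n => ((Kn_compact a n).isClosed).inter (IsClosed.preimage (F_cont a) isClosed_singleton)
  have hsub : ∀ n, D (n+1) ⊆ D n := fun n => Set.inter_subset_inter_left _ (Kn_sub ha ha' n)
  have hcomp : IsCompact (D 0) :=
    (Kn_compact a 0).inter_right (IsClosed.preimage (F_cont a) isClosed_singleton)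
  obtain ⟨z, hz⟩ := IsCompact.nonempty_iInter_of_sequence_nonempty_isCompact_isClosed
    D hsub hne hcomp hclosed
  refine ⟨z, ?_, ?_⟩
  · simp only [Kinf, Set.mem_iInter]; intro n; exact ((Set.mem_iInter.1 hz) n).1
  · have := ((Set.mem_iInter.1 hz) 0).2
    simpa using this

noncomputable def stepb {a : ℝ} (ha : 0 < a) (ha' : a < 1/6) :
    {p : ℝ × ℝ // p ∈ Kinf a} → {p : ℝ × ℝ // p ∈ Kinf a} :=
  fun z => ⟨(preimage_step ha ha' z.2).choose, (preimage_step ha ha' z.2).choose_spec.1⟩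

lemma stepb_spec {a : ℝ} (ha : 0 < a) (ha' : a < 1/6) (z : {p : ℝ × ℝ // p ∈ Kinf a}) :
    F a (stepb ha ha' z).val = z.val :=
  (preimage_step ha ha' z.2).choose_spec.2

section X
variable {a : ℝ} (ha : 0 < a) (ha' : a < 1/6) {q : ℝ × ℝ} (hq : q ∈ Kinf a)

noncomputable def Xfun (ha : 0 < a) (ha' : a < 1/6) (hq : q ∈ Kinf a) : ℤ → ℝ × ℝ :=
  fun n => if 0 ≤ n then (F a)^[n.toNat] q else ((stepb ha ha')^[(-n).toNat] ⟨q, hq⟩).val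

lemma Xfun_zero : Xfun ha ha' hq 0 = q := by simp [Xfun]

lemma Xfun_rec : ∀ n : ℤ, Xfun ha ha' hq (n + 1) = F a (Xfun ha ha' hq n) := by
  intro n
  rcases le_or_gt 0 n with hn | hn
  · have h1 : (0:ℤ) ≤ n + 1 := by omega
    have h2 : (n + 1).toNat = n.toNat + 1 := by omega
    simp only [Xfun, if_pos hn, if_pos h1, h2, Function.iterate_succ_apply']
  · rcases eq_or_lt_of_le (by omega : n ≤ -1) with h1 | h1
    · subst h1
      simp only [Xfun]
      norm_num
      exact (stepb_spec ha ha' ⟨q, hq⟩).symm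
    · have h2 : ¬ (0:ℤ) ≤ n := by omega
      have h3 : ¬ (0:ℤ) ≤ n + 1 := by omega
      have h4 : (-n).toNat = (-(n+1)).toNat + 1 := by omega
      simp only [Xfun, if_neg h2, if_neg h3, h4, Function.iterate_succ_apply']
      rw [stepb_spec ha ha']

lemma Xfun_memR : ∀ n : ℤ, Xfun ha ha' hq n ∈ Rset := by
  intro n
  rcases le_or_gt 0 n with hn | hn
  · simp only [Xfun, if_pos hn]
    induction n.toNat with
    | zero => simpa using Kinf_sub_R a hq
    | succ k ih => rw [Function.iterate_succ_apply']; exact Rset_inv ha ha' ih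
  · simp only [Xfun, if_neg (by omega : ¬ (0:ℤ) ≤ n)]
    exact Kinf_sub_R a ((stepb ha ha')^[(-n).toNat] ⟨q, hq⟩).property

end X

lemma x_bound {p : ℝ × ℝ} (hp : p ∈ Rset) : p.1 - π ≤ (π/2) * |Real.sin p.1| ∧ 0 ≤ p.1 - π := by
  obtain ⟨h1, h2, h3, h4, h5⟩ := hp
  set u := p.1 - π with hu
  have hu0 : 0 ≤ u := by linarith
  have hu1 : u ≤ 1 := by linarith
  have habs : |u| ≤ π/2 := by
    rw [abs_of_nonneg hu0]; linarith [Real.pi_gt_three]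
  have key := Real.mul_abs_le_abs_sin habs
  have hsx : Real.sin p.1 = - Real.sin u := by
    rw [hu, show p.1 - π = -(π - p.1) by ring, Real.sin_neg, Real.sin_pi_sub]; ring
  have habs2 : |Real.sin p.1| = |Real.sin u| := by rw [hsx, abs_neg]
  constructor
  · rw [habs2]
    rw [abs_of_nonneg hu0] at key
    have hπ := Real.pi_pos
    calc u = (π/2) * (2/π * u) := by field_simp
      _ ≤ (π/2) * |Real.sin u| := mul_le_mul_of_nonneg_left key (by positivity)
  · exact hu0

lemma y_bound {p : ℝ × ℝ} (hp : p ∈ Rset) :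
    min p.2 (π - p.2) ≤ (π/2) * |Real.sin p.2| ∧ 0 ≤ min p.2 (π - p.2) := by
  obtain ⟨h1, h2, h3, h4, h5⟩ := hp
  set m := min p.2 (π - p.2) with hm
  have hm0 : 0 ≤ m := le_min h3 (by linarith)
  have hm2 : m ≤ π/2 := by
    rcases min_le_iff.2 (Or.inl (le_refl p.2)) with _
    have : m ≤ p.2 := min_le_left _ _
    have : m ≤ π - p.2 := min_le_right _ _
    have : m + m ≤ π := by
      have h := min_le_left p.2 (π - p.2); have h' := min_le_right p.2 (π - p.2); linarith
    linarith
  have hsin : Real.sin p.2 = Real.sin m := by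
    rcases le_total p.2 (π - p.2) with h | h
    · rw [hm, min_eq_left h]
    · rw [hm, min_eq_right h, Real.sin_pi_sub]
  have habs : |m| ≤ π/2 := by rwa [abs_of_nonneg hm0]
  have key := Real.mul_abs_le_abs_sin habs
  rw [abs_of_nonneg hm0] at key
  constructor
  · rw [hsin]
    have hπ := Real.pi_pos
    calc m = (π/2) * (2/π * m) := by field_simp
      _ ≤ (π/2) * |Real.sin m| := mul_le_mul_of_nonneg_left key (by positivity)
  · exact hm0

lemma dichotomy {W : ℕ → ℝ × ℝ} (hR : ∀ k, W k ∈ Rset)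
    (hstep : ∀ k, |(W (k+1)).2 - (W k).2| ≤ 1/2)
    (hσ : Tendsto (fun k => Real.sin (W k).1 ^ 2 + Real.sin (W k).2 ^ 2) atTop (𝓝 0)) :
    Tendsto W atTop (𝓝 P0) ∨ Tendsto W atTop (𝓝 P1) := by
  -- |sin| of coordinates tends to 0
  have hσ0 : ∀ k, (0:ℝ) ≤ Real.sin (W k).1 ^ 2 + Real.sin (W k).2 ^ 2 := by
    intro k; positivity
  have hsx : Tendsto (fun k => |Real.sin (W k).1|) atTop (𝓝 0) := by
    have hb : ∀ k, |Real.sin (W k).1| ≤ Real.sqrt (Real.sin (W k).1 ^ 2 + Real.sin (W k).2 ^ 2) := by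
      intro k
      rw [← Real.sqrt_sq_eq_abs]
      exact Real.sqrt_le_sqrt (by nlinarith [sq_nonneg (Real.sin (W k).2)])
    have hsqrt : Tendsto (fun k => Real.sqrt (Real.sin (W k).1 ^ 2 + Real.sin (W k).2 ^ 2))
        atTop (𝓝 0) := by
      have := hσ.sqrt
      simpa using this
    exact tendsto_of_tendsto_of_tendsto_of_le_of_le tendsto_const_nhds hsqrt
      (fun k => abs_nonneg _) hb
  have hsy : Tendsto (fun k => |Real.sin (W k).2|) atTop (𝓝 0) := by
    have hb : ∀ k, |Real.sin (W k).2| ≤ Real.sqrt (Real.sin (W k).1 ^ 2 + Real.sin (W k).2 ^ 2) := by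
      intro k
      rw [← Real.sqrt_sq_eq_abs]
      exact Real.sqrt_le_sqrt (by nlinarith [sq_nonneg (Real.sin (W k).1)])
    have hsqrt : Tendsto (fun k => Real.sqrt (Real.sin (W k).1 ^ 2 + Real.sin (W k).2 ^ 2))
        atTop (𝓝 0) := by
      have := hσ.sqrt
      simpa using this
    exact tendsto_of_tendsto_of_tendsto_of_le_of_le tendsto_const_nhds hsqrt
      (fun k => abs_nonneg _) hb
  -- first coordinate tends to π
  have hx : Tendsto (fun k => (W k).1) atTop (𝓝 π) := by
    have h1 : Tendsto (fun k => (W k).1 - π) atTop (𝓝 0) := by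
      have hup : Tendsto (fun k => (π/2) * |Real.sin (W k).1|) atTop (𝓝 0) := by
        have := hsx.const_mul (π/2); simpa using this
      apply tendsto_of_tendsto_of_tendsto_of_le_of_le tendsto_const_nhds hup
      · intro k; exact (x_bound (hR k)).2
      · intro k; exact (x_bound (hR k)).1
    have := h1.add_const π
    simpa using this
  -- min distance of y to {0, π} tends to 0
  set m : ℕ → ℝ := fun k => min (W k).2 (π - (W k).2) with hmdef
  have hm : Tendsto m atTop (𝓝 0) := by
    have hup : Tendsto (fun k => (π/2) * |Real.sin (W k).2|) atTop (𝓝 0) := by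
      have := hsy.const_mul (π/2); simpa using this
    apply tendsto_of_tendsto_of_tendsto_of_le_of_le tendsto_const_nhds hup
    · intro k; exact (y_bound (hR k)).2
    · intro k; exact (y_bound (hR k)).1
  -- eventually m < 1/4
  have hev : ∀ᶠ k in atTop, m k < 1/4 := by
    have := hm.eventually (eventually_lt_nhds (by norm_num : (0:ℝ) < 1/4))
    exact this
  obtain ⟨N, hN⟩ := eventually_atTop.1 hev
  -- locking
  have hπ3 := Real.pi_gt_three
  have hsplit : ∀ k, m k < 1/4 → ((W k).2 < 1/4 ∨ (W k).2 > π - 1/4) := by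
    intro k hk
    rcases le_total (W k).2 (π - (W k).2) with h | h
    · left; rw [hmdef] at hk; simp only [min_eq_left h] at hk; exact hk
    · right; rw [hmdef] at hk; simp only [min_eq_right h] at hk; linarith
  have hlock : ∀ k ≥ N, ((W k).2 < 1/4 → (W (k+1)).2 < 1/4) := by
    intro k hk hy
    have h1 := hN (k+1) (by omega)
    rcases hsplit (k+1) h1 with h | h
    · exact h
    · exfalso
      have := hstep k
      have h2 : (W (k+1)).2 ≤ (W k).2 + 1/2 := by
        have := abs_le.1 this; linarith [this.1, this.2]
      linarith
  rcases hsplit N (hN N (le_refl N)) with hside | hside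
  · -- converge to P0
    left
    have hall : ∀ k ≥ N, (W k).2 < 1/4 := by
      intro k hk
      induction k with
      | zero => have : N = 0 := by omega
                subst this; exact hside
      | succ j ih =>
        rcases eq_or_lt_of_le hk with h | h
        · rw [← h]; exact hside
        · exact hlock j (by omega) (ih (by omega))
    have hy0 : Tendsto (fun k => (W k).2) atTop (𝓝 0) := by
      have heq : ∀ᶠ k in atTop, (W k).2 = m k := by
        rw [eventually_atTop]
        refine ⟨N, fun k hk => ?_⟩
        have h1 : (W k).2 < 1/4 := hall k hk
        simp only [hmdef]
        exact (min_eq_left (by linarith : (W k).2 ≤ π - (W k).2)).symm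
      exact hm.congr' (heq.mono (fun k h => h.symm))
    have := hx.prodMk_nhds hy0
    simpa [P0] using this
  · -- converge to P1
    right
    have hlock' : ∀ k ≥ N, ((W k).2 > π - 1/4 → (W (k+1)).2 > π - 1/4) := by
      intro k hk hy
      have h1 := hN (k+1) (by omega)
      rcases hsplit (k+1) h1 with h | h
      · exfalso
        have := hstep k
        have h2 : (W k).2 ≤ (W (k+1)).2 + 1/2 := by
          have := abs_le.1 this; linarith [this.1, this.2]
        linarith
      · exact h
    have hall : ∀ k ≥ N, (W k).2 > π - 1/4 := by
      intro k hk
      induction k with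
      | zero => have : N = 0 := by omega
                subst this; exact hside
      | succ j ih =>
        rcases eq_or_lt_of_le hk with h | h
        · rw [← h]; exact hside
        · exact hlock' j (by omega) (ih (by omega))
    have hy1 : Tendsto (fun k => (W k).2) atTop (𝓝 π) := by
      have heq : ∀ᶠ k in atTop, (W k).2 = π - m k := by
        rw [eventually_atTop]
        refine ⟨N, fun k hk => ?_⟩
        have h1 : (W k).2 > π - 1/4 := hall k hk
        simp only [hmdef]
        rw [min_eq_right (by linarith : π - (W k).2 ≤ (W k).2)]
        ring
      have h2 : Tendsto (fun k => π - m k) atTop (𝓝 π) := by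
        have := hm.const_sub π
        simpa using this
      exact h2.congr' (heq.mono (fun k h => h.symm))
    have := hx.prodMk_nhds hy1
    simpa [P1] using this

-- additional helpers

lemma L_ge (p : ℝ × ℝ) : -2 ≤ L p := by
  have := Real.neg_one_le_cos p.1
  have := Real.neg_one_le_cos p.2
  simp only [L]; linarith

lemma L_le (p : ℝ × ℝ) : L p ≤ 2 := by
  have := Real.cos_le_one p.1
  have := Real.cos_le_one p.2
  simp only [L]; linarith

lemma L_cont : Continuous L := by
  unfold L; fun_prop

lemma step2 {a : ℝ} (ha : 0 < a) (ha' : a < 1/6) (p : ℝ × ℝ) :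
    |(F a p).2 - p.2| ≤ 1/2 := by
  have h : (F a p).2 - p.2 = a * Real.sin p.1 + 2 * a * Real.sin p.2 := by
    simp only [F]; ring
  rw [h]
  have h1 := Real.abs_sin_le_one p.1
  have h2 := Real.abs_sin_le_one p.2
  have := abs_le.1 h1
  have := abs_le.1 h2
  rw [abs_le]
  constructor <;> nlinarith [this.1, this.2, (abs_le.1 h1).1, (abs_le.1 h1).2]

lemma tendsto_int_atTop {α : Type*} [TopologicalSpace α] {X : ℤ → α} {l : α}
    (h : Tendsto (fun k : ℕ => X k) atTop (𝓝 l)) : Tendsto X atTop (𝓝 l) := by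
  rw [Filter.tendsto_def] at h ⊢
  intro s hs
  obtain ⟨K, hK⟩ := mem_atTop_sets.1 (h s hs)
  rw [mem_atTop_sets]
  refine ⟨(K : ℤ), fun m hm => ?_⟩
  have h0 : 0 ≤ m := le_trans (Int.natCast_nonneg K) hm
  have he : ((m.toNat : ℤ)) = m := Int.toNat_of_nonneg h0
  have := hK m.toNat (by omega)
  simp only [Set.mem_preimage] at this ⊢
  rwa [he] at this

lemma tendsto_int_atBot {α : Type*} [TopologicalSpace α] {X : ℤ → α} {l : α}
    (h : Tendsto (fun k : ℕ => X (-(k:ℤ))) atTop (𝓝 l)) : Tendsto X atBot (𝓝 l) := by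
  rw [Filter.tendsto_def] at h ⊢
  intro s hs
  obtain ⟨K, hK⟩ := mem_atTop_sets.1 (h s hs)
  rw [mem_atBot_sets]
  refine ⟨-(K : ℤ), fun m hm => ?_⟩
  have h0 : m ≤ 0 := le_trans hm (by omega)
  have he : (-(((-m).toNat : ℤ))) = m := by omega
  have := hK (-m).toNat (by omega)
  simp only [Set.mem_preimage] at this ⊢
  rwa [he] at this

lemma X0_eq_P1 {p : ℝ × ℝ} (hp : p ∈ Rset) (h1 : Real.cos p.1 = -1) (h2 : Real.cos p.2 = -1) :
    p = P1 := by
  obtain ⟨hx1, hx2, hy1, hy2, _⟩ := hp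
  have hπ := Real.pi_gt_three
  have hc1 : Real.cos (p.1 - π) = 1 := by
    rw [show p.1 - π = -(π - p.1) by ring, Real.cos_neg, Real.cos_pi_sub, h1]; norm_num
  have hu : p.1 - π = 0 := by
    rw [← Real.cos_eq_one_iff_of_lt_of_lt (by linarith) (by linarith)]
    exact hc1
  have hc2 : Real.cos (π - p.2) = 1 := by
    rw [Real.cos_pi_sub, h2]; norm_num
  have hv : π - p.2 = 0 := by
    rw [← Real.cos_eq_one_iff_of_lt_of_lt (by linarith) (by linarith)]
    exact hc2
  have : p.1 = π := by linarith
  have : p.2 = π := by linarith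
  exact Prod.ext ‹p.1 = π› ‹p.2 = π›

lemma P0_ne_P1 : P0 ≠ P1 := by
  intro h
  have := congrArg Prod.snd h
  simp only [P0, P1] at this
  exact Real.pi_ne_zero this.symm

end Het

theorem stmt_18 (a : ℝ) (ha : 0 < a) (ha' : a < 1/6) :
    ∃ X : ℤ → ℝ × ℝ,
      (∀ n : ℤ, X (n + 1) = F a (X n)) ∧
      (∀ n : ℤ, X n ≠ ((Real.pi, 0) : ℝ × ℝ) ∧ X n ≠ ((Real.pi, Real.pi) : ℝ × ℝ)) ∧
      Filter.Tendsto X Filter.atTop (nhds ((Real.pi, Real.pi) : ℝ × ℝ)) ∧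
      Filter.Tendsto X Filter.atBot (nhds ((Real.pi, 0) : ℝ × ℝ)) := by
  classical
  open Real Filter Topology Het in
  obtain ⟨q, hqK, hqd⟩ := Het.exists_q ha ha'
  set X : ℤ → ℝ × ℝ := Het.Xfun ha ha' hqK with hXdef
  have hrec : ∀ n : ℤ, X (n + 1) = F a (X n) := Het.Xfun_rec ha ha' hqK
  have hmem : ∀ n : ℤ, X n ∈ Het.Rset := Het.Xfun_memR ha ha' hqK
  have hX0 : X 0 = q := Het.Xfun_zero ha ha' hqK
  have hπ3 := Real.pi_gt_three
  -- forward sequence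
  set W : ℕ → ℝ × ℝ := fun k => X k with hWdef
  have hWrec : ∀ k : ℕ, W (k+1) = F a (W k) := by
    intro k
    have hcast : ((k+1 : ℕ) : ℤ) = (k : ℤ) + 1 := by push_cast; ring
    show X ((k+1 : ℕ) : ℤ) = F a (X k)
    rw [hcast, hrec]
  have hRW : ∀ k, W k ∈ Het.Rset := fun k => hmem k
  have hstepW : ∀ k, |(W (k+1)).2 - (W k).2| ≤ 1/2 := by
    intro k; rw [hWrec k]; exact Het.step2 ha ha' (W k)
  set σ : ℝ × ℝ → ℝ := fun p => Real.sin p.1 ^ 2 + Real.sin p.2 ^ 2 with hσdef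
  have hσ0 : ∀ p, 0 ≤ σ p := by intro p; positivity
  set ℓf : ℕ → ℝ := fun k => Het.L (W k) with hℓf
  have hLstep : ∀ k, ℓf (k+1) ≤ ℓf k - a/16 * σ (W k) := by
    intro k
    show Het.L (W (k+1)) ≤ Het.L (W k) - a/16 * σ (W k)
    rw [hWrec k]
    exact Het.lyap ha ha' (W k)
  have hanti : Antitone ℓf := antitone_nat_of_succ_le (fun k => by
    have := hLstep k
    have := hσ0 (W k)
    nlinarith)
  have hbddf : BddBelow (Set.range ℓf) := by
    refine ⟨-2, ?_⟩
    rintro _ ⟨k, rfl⟩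
    exact Het.L_ge _
  have hconvf := tendsto_atTop_ciInf hanti hbddf
  have hshiftf : Filter.Tendsto (fun k => ℓf (k+1)) Filter.atTop (nhds (⨅ i, ℓf i)) :=
    hconvf.comp (tendsto_add_atTop_nat 1)
  have hdifff : Filter.Tendsto (fun k => ℓf k - ℓf (k+1)) Filter.atTop (nhds 0) := by
    have := hconvf.sub hshiftf
    simpa using this
  have hσW : Filter.Tendsto (fun k => σ (W k)) Filter.atTop (nhds 0) := by
    have hupc : Filter.Tendsto (fun k => (16/a) * (ℓf k - ℓf (k+1))) Filter.atTop (nhds 0) := by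
      have := hdifff.const_mul (16/a)
      simpa using this
    apply tendsto_of_tendsto_of_tendsto_of_le_of_le tendsto_const_nhds hupc
    · intro k; exact hσ0 (W k)
    · intro k
      have h1 : a/16 * σ (W k) ≤ ℓf k - ℓf (k+1) := by linarith [hLstep k]
      calc σ (W k) = (16/a) * (a/16 * σ (W k)) := by field_simp
        _ ≤ (16/a) * (ℓf k - ℓf (k+1)) := by
            apply mul_le_mul_of_nonneg_left h1 (by positivity)
  have hdichW := Het.dichotomy hRW hstepW hσW
  -- backward sequence
  set B : ℕ → ℝ × ℝ := fun k => X (-(k:ℤ)) with hBdef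
  have hBrec : ∀ k : ℕ, F a (B (k+1)) = B k := by
    intro k
    have hcast : (-(((k:ℕ)+1 : ℕ) : ℤ)) + 1 = -(k : ℤ) := by push_cast; ring
    have := hrec (-(((k:ℕ)+1 : ℕ) : ℤ))
    rw [hcast] at this
    exact this.symm
  have hRB : ∀ k, B k ∈ Het.Rset := fun k => hmem _
  have hstepB : ∀ k, |(B (k+1)).2 - (B k).2| ≤ 1/2 := by
    intro k
    rw [abs_sub_comm, ← hBrec k]
    exact Het.step2 ha ha' (B (k+1))
  set ℓb : ℕ → ℝ := fun k => Het.L (B k) with hℓb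
  have hLstepB : ∀ k, ℓb k ≤ ℓb (k+1) - a/16 * σ (B (k+1)) := by
    intro k
    show Het.L (B k) ≤ Het.L (B (k+1)) - a/16 * σ (B (k+1))
    rw [← hBrec k]
    exact Het.lyap ha ha' (B (k+1))
  have hmono : Monotone ℓb := monotone_nat_of_le_succ (fun k => by
    have := hLstepB k
    have := hσ0 (B (k+1))
    nlinarith)
  have hbddb : BddAbove (Set.range ℓb) := by
    refine ⟨2, ?_⟩
    rintro _ ⟨k, rfl⟩
    exact Het.L_le _
  have hconvb := tendsto_atTop_ciSup hmono hbddb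
  have hshiftb : Filter.Tendsto (fun k => ℓb (k+1)) Filter.atTop (nhds (⨆ i, ℓb i)) :=
    hconvb.comp (tendsto_add_atTop_nat 1)
  have hdiffb : Filter.Tendsto (fun k => ℓb (k+1) - ℓb k) Filter.atTop (nhds 0) := by
    have := hshiftb.sub hconvb
    simpa using this
  have hσB' : Filter.Tendsto (fun k => σ (B (k+1))) Filter.atTop (nhds 0) := by
    have hupc : Filter.Tendsto (fun k => (16/a) * (ℓb (k+1) - ℓb k)) Filter.atTop (nhds 0) := by
      have := hdiffb.const_mul (16/a)
      simpa using this
    apply tendsto_of_tendsto_of_tendsto_of_le_of_le tendsto_const_nhds hupc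
    · intro k; exact hσ0 (B (k+1))
    · intro k
      have h1 : a/16 * σ (B (k+1)) ≤ ℓb (k+1) - ℓb k := by linarith [hLstepB k]
      calc σ (B (k+1)) = (16/a) * (a/16 * σ (B (k+1))) := by field_simp
        _ ≤ (16/a) * (ℓb (k+1) - ℓb k) := by
            apply mul_le_mul_of_nonneg_left h1 (by positivity)
  have hσB : Filter.Tendsto (fun k => σ (B k)) Filter.atTop (nhds 0) :=
    (tendsto_add_atTop_iff_nat 1).1 hσB'
  have hdichB := Het.dichotomy hRB hstepB hσB
  -- L values at fixed points
  have hLP0 : Het.L Het.P0 = 0 := by simp [Het.L, Het.P0]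
  have hLP1 : Het.L Het.P1 = -2 := by simp [Het.L, Het.P1]; norm_num [Real.cos_pi]
  -- rule out backward limit P1
  have hB0 : Filter.Tendsto B Filter.atTop (nhds Het.P0) := by
    rcases hdichB with h | h
    · exact h
    · exfalso
      have hLB : Filter.Tendsto ℓb Filter.atTop (nhds (Het.L Het.P1)) :=
        (Het.L_cont.tendsto Het.P1).comp h
      have hle : ℓb 0 ≤ Het.L Het.P1 :=
        ge_of_tendsto' hLB (fun k => hmono (Nat.zero_le k))
      rw [hLP1] at hle
      have hb0 : B 0 = X 0 := by simp [hBdef]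
      have hc1 : Real.cos (X 0).1 = -1 := by
        have := Real.neg_one_le_cos (X 0).1
        have := Real.neg_one_le_cos (X 0).2
        have : Het.L (X 0) ≤ -2 := by rw [← hb0]; exact hle
        simp only [Het.L] at this
        linarith [Real.neg_one_le_cos (X 0).1, Real.neg_one_le_cos (X 0).2]
      have hc2 : Real.cos (X 0).2 = -1 := by
        have : Het.L (X 0) ≤ -2 := by rw [← hb0]; exact hle
        simp only [Het.L] at this
        linarith [Real.neg_one_le_cos (X 0).1, Real.neg_one_le_cos (X 0).2]
      have := Het.X0_eq_P1 (hmem 0) hc1 hc2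
      rw [hX0] at this
      rw [this] at hqd
      rw [Het.dist_P1_P0] at hqd
      linarith
  -- rule out forward limit P0
  have hW1 : Filter.Tendsto W Filter.atTop (nhds Het.P1) := by
    rcases hdichW with h | h
    · exfalso
      have hLWlim : Filter.Tendsto ℓf Filter.atTop (nhds (Het.L Het.P0)) :=
        (Het.L_cont.tendsto Het.P0).comp h
      have hinf : (⨅ i, ℓf i) = Het.L Het.P0 := tendsto_nhds_unique hconvf hLWlim
      have hf1 : Het.L Het.P0 ≤ ℓf 1 := by
        rw [← hinf]; exact ciInf_le hbddf 1
      have hLBlim : Filter.Tendsto ℓb Filter.atTop (nhds (Het.L Het.P0)) :=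
        (Het.L_cont.tendsto Het.P0).comp hB0
      have hsup : (⨆ i, ℓb i) = Het.L Het.P0 := tendsto_nhds_unique hconvb hLBlim
      have hb0' : ℓb 0 ≤ Het.L Het.P0 := by
        rw [← hsup]; exact le_ciSup hbddb 0
      rw [hLP0] at hf1 hb0'
      have hb00 : ℓb 0 = Het.L (X 0) := by simp [hℓb, hBdef]
      have hf00 : ℓf 0 = Het.L (X 0) := by simp [hℓf, hWdef]
      have hσ0eq : σ (W 0) = 0 := by
        have h1 := hLstep 0
        have h2 := hσ0 (W 0)
        have h5 : ℓf 0 ≤ 0 := by rw [hf00, ← hb00]; exact hb0'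
        have h6 : a/16 * σ (W 0) ≤ a/16 * 0 := by linarith
        have h7 : σ (W 0) ≤ 0 := le_of_mul_le_mul_left h6 (by positivity)
        exact le_antisymm h7 h2
      have hw0 : W 0 = X 0 := by simp [hWdef]
      have hsx : Real.sin (X 0).1 = 0 := by
        rw [hw0] at hσ0eq
        simp only [hσdef] at hσ0eq
        nlinarith [sq_nonneg (Real.sin (X 0).1), sq_nonneg (Real.sin (X 0).2),
          sq_abs (Real.sin (X 0).1), abs_nonneg (Real.sin (X 0).1)]
      have hsy : Real.sin (X 0).2 = 0 := by
        rw [hw0] at hσ0eq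
        simp only [hσdef] at hσ0eq
        nlinarith [sq_nonneg (Real.sin (X 0).1), sq_nonneg (Real.sin (X 0).2)]
      -- conclude X 0 ∈ {P0, P1}
      have hxb := Het.x_bound (hmem 0)
      have hyb := Het.y_bound (hmem 0)
      rw [hsx] at hxb
      rw [hsy] at hyb
      simp only [abs_zero, mul_zero] at hxb hyb
      have hx0 : (X 0).1 = Real.pi := by linarith [hxb.1, hxb.2]
      have hmin : min (X 0).2 (Real.pi - (X 0).2) = 0 := le_antisymm hyb.1 hyb.2
      have hy0 : (X 0).2 = 0 ∨ (X 0).2 = Real.pi := by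
        rcases le_total (X 0).2 (Real.pi - (X 0).2) with hc | hc
        · left; rw [min_eq_left hc] at hmin; exact hmin
        · right; rw [min_eq_right hc] at hmin; linarith
      rcases hy0 with hy0 | hy0
      · have : X 0 = Het.P0 := Prod.ext hx0 hy0
        rw [hX0] at this; rw [this] at hqd
        rw [dist_self] at hqd; linarith
      · have : X 0 = Het.P1 := Prod.ext hx0 hy0
        rw [hX0] at this; rw [this] at hqd
        rw [Het.dist_P1_P0] at hqd; linarith
    · exact h
  -- convert to ℤ limits
  have hXtop : Filter.Tendsto X Filter.atTop (nhds Het.P1) := Het.tendsto_int_atTop hW1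
  have hXbot : Filter.Tendsto X Filter.atBot (nhds Het.P0) := Het.tendsto_int_atBot hB0
  -- orbit never hits the fixed points
  have hne0 : ∀ n : ℤ, X n ≠ Het.P0 := by
    intro n h
    have hfwd : ∀ k : ℕ, X (n + k) = Het.P0 := by
      intro k
      induction k with
      | zero => simpa using h
      | succ j ih =>
        have hcast : (n + ((j:ℕ)+1 : ℕ) : ℤ) = (n + j) + 1 := by push_cast; ring
        rw [hcast, hrec, ih, Het.FP0]
    have hev : ∀ᶠ m in Filter.atTop, X m = Het.P0 := by
      rw [Filter.eventually_atTop]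
      refine ⟨n, fun m hm => ?_⟩
      have := hfwd (m - n).toNat
      rwa [show n + ((m - n).toNat : ℤ) = m by omega] at this
    have : Filter.Tendsto X Filter.atTop (nhds Het.P0) :=
      Filter.Tendsto.congr' (hev.mono fun m hm => hm.symm) tendsto_const_nhds
    exact Het.P0_ne_P1 (tendsto_nhds_unique this hXtop)
  have hne1 : ∀ n : ℤ, X n ≠ Het.P1 := by
    intro n h
    have hbwd : ∀ k : ℕ, X (n - k) = Het.P1 := by
      intro k
      induction k with
      | zero => simpa using h
      | succ j ih =>
        have hcast : (n - j : ℤ) = (n - ((j:ℕ)+1 : ℕ)) + 1 := by push_cast; ring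
        rw [hcast, hrec] at ih
        have : X (n - ((j:ℕ)+1 : ℕ)) = Het.P1 := by
          apply Het.F_inj ha ha'
          rw [ih, Het.FP1]
        exact this
    have hev : ∀ᶠ m in Filter.atBot, X m = Het.P1 := by
      rw [Filter.eventually_atBot]
      refine ⟨n, fun m hm => ?_⟩
      have := hbwd (n - m).toNat
      rwa [show n - ((n - m).toNat : ℤ) = m by omega] at this
    have : Filter.Tendsto X Filter.atBot (nhds Het.P1) :=
      Filter.Tendsto.congr' (hev.mono fun m hm => hm.symm) tendsto_const_nhds
    exact Het.P0_ne_P1 (tendsto_nhds_unique hXbot this)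
  refine ⟨X, hrec, fun n => ⟨?_, ?_⟩, ?_, ?_⟩
  · simpa [Het.P0] using hne0 n
  · simpa [Het.P1] using hne1 n
  · simpa [Het.P1] using hXtop
  · simpa [Het.P0] using hXbot
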